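/- Let q be a prime power, k > 1, and consider the pseudo-projective rectangle R(q, q^k) inside PG(2, q^k): fix the point D = [0,0,1], take the special lines s_β : x + βy = 0 for β ∈ F_q and s_∞ : y = 0, let the point set be the union of these q+1 lines, and let ordinary lines be the restrictions of lines ⟨a,b,1⟩ (a, b ∈ F_{q^k}) to this point set. Then the graph whose vertices are the ordinary lines, adjacent iff they share a point of the point set, is isomorphic to the bilinear forms graph H_q(2,k): two lines ⟨a1,b1,1⟩ and ⟨a2,b2,1⟩ are adjacent iff (a2-a1, b2-b1), viewed as a 2×k matrix over F_q via a fixed F_q-basis of F_{q^k}, has rank 1. -/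

import Mathlib

open scoped LinearAlgebra.Projectivization Classical

noncomputable section

/-- The point set `𝒫` of the pseudo-projective rectangle `R(q, q^k)` inside `PG(2, K)`,
where `F ⊆ K` realizes `F_q ⊆ F_{q^k}`: the union of the special lines
`s_β : x + βy = 0` (for `β ∈ F`) and `s_∞ : y = 0`, all through `D = [0,0,1]`.
Incidence with a line `⟨a,b,c⟩` is `a*x + b*y + c*z = 0` on a (hence any) homogeneous
representative. -/
def PRpoints (F K : Type*) [Field F] [Field K] [Algebra F K] : Set (ℙ K (Fin 3 → K)) :=
  {Pt | Pt.rep 1 = 0 ∨ ∃ β : F, Pt.rep 0 + algebraMap F K β * Pt.rep 1 = 0}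

/-- The ordinary line `⟨a,b,1⟩` of the pseudo-projective rectangle: the restriction of the
projective line `a*x + b*y + z = 0` to the point set `𝒫`. -/
def PRordLine (F : Type*) {K : Type*} [Field F] [Field K] [Algebra F K] (a b : K) :
    Set (ℙ K (Fin 3 → K)) :=
  {Pt ∈ PRpoints F K | a * Pt.rep 0 + b * Pt.rep 1 + Pt.rep 2 = 0}

/-- The graph of lines of the pseudo-projective rectangle: vertices are the ordinary lines
`⟨a,b,1⟩`, indexed by `(a,b) ∈ K × K`, two adjacent iff they share a point of `𝒫`. -/
def PRgraph (F K : Type*) [Field F] [Field K] [Algebra F K] : SimpleGraph (K × K) where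
  Adj u v := u ≠ v ∧ (PRordLine F u.1 u.2 ∩ PRordLine F v.1 v.2).Nonempty
  symm := ⟨by
    rintro u v ⟨h, p, hp1, hp2⟩
    exact ⟨h.symm, p, hp2, hp1⟩⟩
  loopless := ⟨fun u hu => hu.1 rfl⟩

/-- The bilinear forms graph `H_q(2,k)` over a field `F` with `q = |F|`: vertices the
`2 × k` matrices over `F`, adjacent iff the difference has rank 1. -/
def bilinFormsGraph (F : Type*) [Field F] (k : ℕ) : SimpleGraph (Matrix (Fin 2) (Fin k) F) where
  Adj M N := M ≠ N ∧ (M - N).rank = 1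
  symm := ⟨by
    rintro M N ⟨h, hr⟩
    refine ⟨h.symm, ?_⟩
    rw [show N - M = -(M - N) by abel]
    have hneg : (-(M - N)).rank = (M - N).rank := by
      unfold Matrix.rank
      rw [show (-(M - N)).mulVecLin = -((M - N).mulVecLin) by
            ext v; simp [Matrix.neg_mulVec], LinearMap.range_neg]
    rw [hneg]; exact hr⟩
  loopless := ⟨fun M hM => hM.1 rfl⟩

/-- The matrix `M(l)` of the ordinary line `l = ⟨a,b,1⟩`: rows are the coordinate vectors
`B(a)`, `B(b)` of `a, b ∈ K` with respect to a fixed `F`-basis of `K`. -/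
def lineMatrix {F K : Type*} [Field F] [Field K] [Algebra F K] {k : ℕ}
    (b : Module.Basis (Fin k) F K) (u : K × K) : Matrix (Fin 2) (Fin k) F :=
  Matrix.of fun i j => b.repr (![u.1, u.2] i) j

section Aux

variable {F K : Type*} [Field F] [Field K] [Algebra F K]

/-- rank of negation -/
lemma matRankNeg {m n : ℕ} (M : Matrix (Fin m) (Fin n) F) : (-M).rank = M.rank := by
  unfold Matrix.rank
  rw [show (-M).mulVecLin = -(M.mulVecLin) by ext v; simp [Matrix.neg_mulVec],
    LinearMap.range_neg]

lemma spanPairRank {k : ℕ} (b : Module.Basis (Fin k) F K) (x y : K) :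
    (Matrix.of fun i j => b.repr (![x, y] i) j).rank = 1 ↔
      ((x = 0 ∧ y ≠ 0) ∨ (x ≠ 0 ∧ ∃ β : F, y = algebraMap F K β * x)) := by
  set M : Matrix (Fin 2) (Fin k) F := Matrix.of fun i j => b.repr (![x, y] i) j with hM
  have hrow : ∀ i, M i = b.equivFun (![x, y] i) := by
    intro i; ext j; simp [hM, Module.Basis.equivFun_apply]
  have hrange : Set.range M = ⇑(b.equivFun : K →ₗ[F] (Fin k → F)) '' {x, y} := by
    ext v
    constructor
    · rintro ⟨i, rfl⟩
      fin_cases i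
      · exact ⟨x, by simp, (hrow 0).symm⟩
      · exact ⟨y, by simp, (hrow 1).symm⟩
    · rintro ⟨w, hw, rfl⟩
      rcases hw with rfl | rfl
      · exact ⟨0, hrow 0⟩
      · exact ⟨1, hrow 1⟩
  have hrank : M.rank = Module.finrank F (Submodule.span F ({x, y} : Set K)) := by
    rw [Matrix.rank_eq_finrank_span_row, show Set.range M.row = Set.range M from rfl, hrange,
      Submodule.span_image (b.equivFun : K →ₗ[F] (Fin k → F))]
    exact LinearEquiv.finrank_map_eq b.equivFun _
  rw [hrank]
  constructor
  · intro h1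
    by_cases hx : x = 0
    · subst hx
      refine Or.inl ⟨rfl, ?_⟩
      rintro rfl
      rw [show ({(0 : K), (0 : K)} : Set K) = {0} by simp,
        Submodule.span_zero_singleton, finrank_bot] at h1
      exact one_ne_zero h1.symm
    · refine Or.inr ⟨hx, ?_⟩
      have hle : Submodule.span F ({x} : Set K) ≤ Submodule.span F ({x, y} : Set K) :=
        Submodule.span_mono (by simp)
      have : FiniteDimensional F (Submodule.span F ({x, y} : Set K)) :=
        FiniteDimensional.span_of_finite F (Set.toFinite _)
      have heq := Submodule.eq_of_le_of_finrank_eq hle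
        (by rw [finrank_span_singleton hx, h1])
      have hy : y ∈ Submodule.span F ({x} : Set K) := by
        rw [heq]; exact Submodule.subset_span (by simp)
      obtain ⟨β, hβ⟩ := Submodule.mem_span_singleton.1 hy
      exact ⟨β, by rw [← hβ, Algebra.smul_def]⟩
  · rintro (⟨rfl, hy⟩ | ⟨hx, β, rfl⟩)
    · rw [show ({(0 : K), y} : Set K) = insert 0 {y} from rfl, Submodule.span_insert_zero]
      exact finrank_span_singleton hy
    · have : Submodule.span F ({x, algebraMap F K β * x} : Set K) =
          Submodule.span F ({x} : Set K) := by
        apply le_antisymm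
        · rw [Submodule.span_le]
          rintro w (rfl | rfl)
          · exact Submodule.subset_span rfl
          · rw [← Algebra.smul_def]
            exact Submodule.smul_mem _ _ (Submodule.subset_span rfl)
        · exact Submodule.span_mono (by simp)
      rw [this]
      exact finrank_span_singleton hx

lemma interNonempty (u v : K × K) (huv : u ≠ v) :
    (PRordLine F u.1 u.2 ∩ PRordLine F v.1 v.2).Nonempty ↔
      ((v.1 - u.1 = 0 ∧ v.2 - u.2 ≠ 0) ∨
        (v.1 - u.1 ≠ 0 ∧ ∃ β : F, v.2 - u.2 = algebraMap F K β * (v.1 - u.1))) := by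
  obtain ⟨a1, b1⟩ := u
  obtain ⟨a2, b2⟩ := v
  simp only at *
  have hne : ¬(a2 - a1 = 0 ∧ b2 - b1 = 0) := by
    rintro ⟨h1, h2⟩
    apply huv
    rw [Prod.mk.injEq]
    exact ⟨by linear_combination -h1, by linear_combination -h2⟩
  constructor
  · rintro ⟨Pt, ⟨hP, hu⟩, _, hv⟩
    set x := Pt.rep 0
    set y := Pt.rep 1
    set z := Pt.rep 2
    have hsub : (a2 - a1) * x + (b2 - b1) * y = 0 := by linear_combination hv - hu
    have hxy : ¬(x = 0 ∧ y = 0) := by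
      rintro ⟨hx, hy⟩
      apply Pt.rep_nonzero
      have hz : z = 0 := by linear_combination hu - a1 * hx - b1 * hy
      funext i
      fin_cases i <;> assumption
    have hy0 : y = 0 → (a2 - a1 = 0 ∧ b2 - b1 ≠ 0) := by
      intro hy
      have hx : x ≠ 0 := fun hx => hxy ⟨hx, hy⟩
      have ha : a2 - a1 = 0 := by
        have h' : (a2 - a1) * x = 0 := by linear_combination hsub - (b2 - b1) * hy
        rcases mul_eq_zero.1 h' with h | h
        · exact h
        · exact absurd h hx
      exact ⟨ha, fun hb => hne ⟨ha, hb⟩⟩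
    rcases hP with hy | ⟨β, hβ⟩
    · exact Or.inl (hy0 hy)
    · by_cases hy : y = 0
      · exact Or.inl (hy0 hy)
      · have hb : b2 - b1 = algebraMap F K β * (a2 - a1) := by
          apply mul_right_cancel₀ hy
          linear_combination hsub - (a2 - a1) * hβ
        have ha : a2 - a1 ≠ 0 := by
          rintro ha
          exact hne ⟨ha, by rw [hb, ha, mul_zero]⟩
        exact Or.inr ⟨ha, β, hb⟩
  · intro h
    set w : Fin 3 → K := ![b2 - b1, -(a2 - a1), b1 * (a2 - a1) - a1 * (b2 - b1)] with hw
    have hw0 : w ≠ 0 := by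
      rcases h with ⟨ha, hb⟩ | ⟨ha, _⟩
      · intro hc
        have h1 : b2 - b1 = 0 := congrFun hc 0
        exact hb h1
      · intro hc
        have h1 : -(a2 - a1) = 0 := congrFun hc 1
        exact ha (by linear_combination -h1)
    refine ⟨Projectivization.mk K w hw0, ?_⟩
    obtain ⟨c, hc⟩ := Projectivization.exists_smul_eq_mk_rep K w hw0
    set Pt := Projectivization.mk K w hw0
    have h0 : Pt.rep 0 = c * (b2 - b1) := by rw [← hc]; simp [hw, Units.smul_def, smul_eq_mul]
    have h1 : Pt.rep 1 = c * (-(a2 - a1)) := by rw [← hc]; simp [hw, Units.smul_def, smul_eq_mul]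
    have h2 : Pt.rep 2 = c * (b1 * (a2 - a1) - a1 * (b2 - b1)) := by rw [← hc]; simp [hw, Units.smul_def, smul_eq_mul]
    have hmem : Pt ∈ PRpoints F K := by
      rcases h with ⟨ha, _⟩ | ⟨_, β, hβ⟩
      · exact Or.inl (by rw [h1, ha]; ring)
      · exact Or.inr ⟨β, by rw [h0, h1]; linear_combination (c : K) * hβ⟩
    refine ⟨⟨hmem, ?_⟩, hmem, ?_⟩
    · rw [h0, h1, h2]; ring
    · rw [h0, h1, h2]; ring

lemma lineMatrixSub {k : ℕ} (b : Module.Basis (Fin k) F K) (u v : K × K) :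
    lineMatrix b v - lineMatrix b u =
      Matrix.of fun i j => b.repr (![v.1 - u.1, v.2 - u.2] i) j := by
  ext i j
  fin_cases i <;>
    simp [lineMatrix, Matrix.sub_apply, map_sub]

end Aux

/-- For a prime power `q` and `k > 1`, the graph of lines of the
pseudo-projective rectangle `R(q, q^k)` in `PG(2, q^k)` is isomorphic to the bilinear forms
graph `H_q(2,k)`; explicitly, two ordinary lines `⟨a1,b1,1⟩`, `⟨a2,b2,1⟩` are adjacent iff
the `2 × k` matrix of `(a2-a1, b2-b1)` over `F_q` has rank 1. -/
theorem stmt16 (q k : ℕ) (hq : IsPrimePow q) (hk : 1 < k)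
    (F K : Type*) [Field F] [Field K] [Fintype F] [Fintype K] [Algebra F K]
    (hF : Fintype.card F = q) (hK : Fintype.card K = q ^ k)
    (b : Module.Basis (Fin k) F K) :
    (∀ u v : K × K, (PRgraph F K).Adj u v ↔
      u ≠ v ∧ (lineMatrix b v - lineMatrix b u).rank = 1) ∧
    Nonempty (PRgraph F K ≃g bilinFormsGraph F k) := by
  have key : ∀ u v : K × K, (PRgraph F K).Adj u v ↔
      u ≠ v ∧ (lineMatrix b v - lineMatrix b u).rank = 1 := by
    intro u v
    constructor
    · rintro ⟨huv, hne⟩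
      refine ⟨huv, ?_⟩
      rw [lineMatrixSub, spanPairRank]
      exact (interNonempty u v huv).1 hne
    · rintro ⟨huv, hr⟩
      refine ⟨huv, (interNonempty u v huv).2 ?_⟩
      rw [lineMatrixSub, spanPairRank] at hr
      exact hr
  refine ⟨key, ⟨?_⟩⟩
  have hinj : Function.Injective (lineMatrix b) := by
    intro u v huv
    have h0 : ∀ w : K × K, (b.equivFun.symm fun j => lineMatrix b w 0 j,
        b.equivFun.symm fun j => lineMatrix b w 1 j) = w := by
      intro w
      have e0 : (fun j => lineMatrix b w 0 j) = b.equivFun w.1 := by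
        ext j; simp [lineMatrix, Module.Basis.equivFun_apply]
      have e1 : (fun j => lineMatrix b w 1 j) = b.equivFun w.2 := by
        ext j; simp [lineMatrix, Module.Basis.equivFun_apply]
      rw [e0, e1, LinearEquiv.symm_apply_apply, LinearEquiv.symm_apply_apply]
    rw [← h0 u, ← h0 v, huv]
  have hsurj : Function.Surjective (lineMatrix b) := by
    intro M
    refine ⟨(b.equivFun.symm (M 0), b.equivFun.symm (M 1)), ?_⟩
    ext i j
    fin_cases i
    · show b.repr (b.equivFun.symm (M 0)) j = M 0 j
      rw [← Module.Basis.equivFun_apply, LinearEquiv.apply_symm_apply]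
    · show b.repr (b.equivFun.symm (M 1)) j = M 1 j
      rw [← Module.Basis.equivFun_apply, LinearEquiv.apply_symm_apply]
  refine ⟨(Equiv.ofBijective (lineMatrix b) ⟨hinj, hsurj⟩), @fun u v => ?_⟩
  show (bilinFormsGraph F k).Adj (lineMatrix b u) (lineMatrix b v) ↔ (PRgraph F K).Adj u v
  rw [key]
  constructor
  · rintro ⟨h1, h2⟩
    refine ⟨fun h => h1 (by rw [h]), ?_⟩
    rw [show lineMatrix b v - lineMatrix b u = -(lineMatrix b u - lineMatrix b v) by abel,
      matRankNeg]
    exact h2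
  · rintro ⟨h1, h2⟩
    refine ⟨fun h => h1 (hinj h), ?_⟩
    rw [show lineMatrix b u - lineMatrix b v = -(lineMatrix b v - lineMatrix b u) by abel,
      matRankNeg]
    exact h2
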